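/- Let A, Â ∈ ℝ^{n×n} be symmetric matrices with 0 ⪯ Â ⪯ A, and set P̂ := Â + I and M̂ := P̂^{-1/2}(A+I)P̂^{-1/2}. Then ‖log(M̂)‖_* = trace(log(A+I)) − trace(log(P̂)) = ‖log(A+I) − log(P̂)‖_*. -/

import Mathlib

open MeasureTheory ProbabilityTheory Matrix

/-- Matrix logarithm of a real symmetric matrix, obtained by applying the real logarithm
to the eigenvalues in a spectral decomposition. -/
noncomputable def matLog {n : ℕ} (B : Matrix (Fin n) (Fin n) ℝ) : Matrix (Fin n) (Fin n) ℝ :=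
  if hB : B.IsHermitian then
    (hB.eigenvectorUnitary : Matrix (Fin n) (Fin n) ℝ) *
      Matrix.diagonal (fun i => Real.log (hB.eigenvalues i)) *
      (star (hB.eigenvectorUnitary : Matrix (Fin n) (Fin n) ℝ))
  else 0

/-- The old Mathlib `Matrix.PosSemidef.sqrt` (removed), spelled out with its old definition. -/
noncomputable def posSemidefSqrt {n : ℕ} {B : Matrix (Fin n) (Fin n) ℝ} (hB : B.PosSemidef) :
    Matrix (Fin n) (Fin n) ℝ :=
  (hB.1.eigenvectorUnitary : Matrix (Fin n) (Fin n) ℝ) *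
    Matrix.diagonal (fun i => Real.sqrt (hB.1.eigenvalues i)) *
    (star (hB.1.eigenvectorUnitary : Matrix (Fin n) (Fin n) ℝ))

open scoped Classical in
/-- `B^{-1/2}`: the inverse of the unique positive semidefinite square root of a
positive semidefinite matrix `B`. -/
noncomputable def invSqrt {n : ℕ} (B : Matrix (Fin n) (Fin n) ℝ) : Matrix (Fin n) (Fin n) ℝ :=
  if hB : B.PosSemidef then (posSemidefSqrt hB)⁻¹ else 0

/-- Squared Frobenius norm of a matrix. -/
noncomputable def frobSq {m n : ℕ} (H : Matrix (Fin m) (Fin n) ℝ) : ℝ :=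
  ∑ i, ∑ j, (H i j) ^ 2

/-- Singular values of a matrix (square roots of the eigenvalues of `HᴴH`). -/
noncomputable def singVals {m n : ℕ} (H : Matrix (Fin m) (Fin n) ℝ) : Fin n → ℝ :=
  fun i => Real.sqrt ((show (Hᵀ * H).IsHermitian by
    simpa using Matrix.isHermitian_conjTranspose_mul_self H).eigenvalues i)

/-- Nuclear norm: sum of the singular values. -/
noncomputable def nuclearNorm {m n : ℕ} (H : Matrix (Fin m) (Fin n) ℝ) : ℝ :=
  ∑ i, singVals H i

/-- Spectral norm: largest singular value. -/
noncomputable def specNorm {m n : ℕ} (H : Matrix (Fin m) (Fin n) ℝ) : ℝ :=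
  ⨆ i, singVals H i

/-- Eigenvalues of a symmetric matrix, sorted in decreasing order
(`eigDesc B i` is the `i`-th largest eigenvalue). -/
noncomputable def eigDesc {n : ℕ} (B : Matrix (Fin n) (Fin n) ℝ) : Fin n → ℝ :=
  if hB : B.IsHermitian then
    fun i => (hB.eigenvalues ∘ Tuple.sort hB.eigenvalues) i.rev
  else 0

/-- Law of a standard Gaussian random vector in `ℝⁿ` (i.i.d. `gaussianReal 0 1` entries). -/
noncomputable def stdGaussian (n : ℕ) : Measure (Fin n → ℝ) :=
  Measure.pi fun _ => gaussianReal 0 1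

/-- Law of a random `n × ℓ` matrix with i.i.d. standard Gaussian entries. -/
noncomputable def stdGaussianMatrix (n ℓ : ℕ) : Measure (Fin n → Fin ℓ → ℝ) :=
  Measure.pi fun _ => Measure.pi fun _ => gaussianReal 0 1

/-- The truncated-spectral-decomposition preconditioner `P_r = A_r + I`, where
`A_r = U_r Λ_r U_rᵀ` keeps the `r` leading eigenvalues. -/
noncomputable def truncP {n : ℕ} (U : Matrix (Fin n) (Fin n) ℝ) (lam : Fin n → ℝ) (r : ℕ) :
    Matrix (Fin n) (Fin n) ℝ :=
  U * Matrix.diagonal (fun i : Fin n => if (i : ℕ) < r then lam i else 0) * Uᵀ + 1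

/-- The idealized preconditioned matrix `M_r = P_r^{-1/2} (A + I) P_r^{-1/2}`. -/
noncomputable def truncM {n : ℕ} (A U : Matrix (Fin n) (Fin n) ℝ) (lam : Fin n → ℝ) (r : ℕ) :
    Matrix (Fin n) (Fin n) ℝ :=
  invSqrt (truncP U lam r) * (A + 1) * invSqrt (truncP U lam r)

/-- The Nyström approximation `Â = AΩ(ΩᵀAΩ)⁻¹ΩᵀA`. -/
noncomputable def nystrom {n ℓ : ℕ} (A : Matrix (Fin n) (Fin n) ℝ)
    (Ω : Matrix (Fin n) (Fin ℓ) ℝ) : Matrix (Fin n) (Fin n) ℝ :=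
  A * Ω * (Ωᵀ * A * Ω)⁻¹ * Ωᵀ * A

/-- The Nyström-preconditioned matrix `M̂ = P̂^{-1/2} (A + I) P̂^{-1/2}` with `P̂ = Â + I`. -/
noncomputable def nysPrec {n ℓ : ℕ} (A : Matrix (Fin n) (Fin n) ℝ)
    (Ω : Matrix (Fin n) (Fin ℓ) ℝ) : Matrix (Fin n) (Fin n) ℝ :=
  invSqrt (nystrom A Ω + 1) * (A + 1) * invSqrt (nystrom A Ω + 1)


section LogAux

open Filter Topology

variable {n : ℕ}

local notation "Mat" => Matrix (Fin n) (Fin n) ℝ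

lemma star_vec (v : Fin n → ℝ) : star v = v := by
  funext i; simp

open scoped MatrixOrder in
lemma posSemidefSqrt_eq_cfc {B : Mat} (hB : B.PosSemidef) : posSemidefSqrt hB = CFC.sqrt B := by
  rw [CFC.sqrt_eq_real_sqrt B hB.nonneg, cfcₙ_eq_cfc, hB.1.cfc_eq, Matrix.IsHermitian.cfc, Unitary.conjStarAlgAut_apply]
  simp [posSemidefSqrt, Function.comp_def]

open scoped MatrixOrder in
lemma posSemidefSqrt_psd {B : Mat} (hB : B.PosSemidef) : (posSemidefSqrt hB).PosSemidef := by
  rw [posSemidefSqrt_eq_cfc]; exact (CFC.sqrt_nonneg B).posSemidef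

open scoped MatrixOrder in
lemma posSemidefSqrt_mul_self {B : Mat} (hB : B.PosSemidef) :
    posSemidefSqrt hB * posSemidefSqrt hB = B := by
  rw [posSemidefSqrt_eq_cfc]; exact CFC.sqrt_mul_sqrt_self B hB.nonneg

open scoped MatrixOrder in
lemma psd_eq_sqrt_of_sq_eq {A B : Mat} (hA : A.PosSemidef) (hB : B.PosSemidef) (h : A ^ 2 = B) :
    A = posSemidefSqrt hB := by
  rw [posSemidefSqrt_eq_cfc]; exact (CFC.sqrt_unique (by rw [← sq]; exact h) hA.nonneg).symm

/-- Spectral theorem over ℝ without the coercion. -/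
lemma spectral_real {A : Mat} (hA : A.IsHermitian) :
    A = (hA.eigenvectorUnitary : Mat) * Matrix.diagonal hA.eigenvalues *
      star (hA.eigenvectorUnitary : Mat) := by
  have := hA.spectral_theorem
  simpa [RCLike.ofReal_real_eq_id] using this

lemma star_mul_self_unitary {A : Mat} (hA : A.IsHermitian) :
    star (hA.eigenvectorUnitary : Mat) * (hA.eigenvectorUnitary : Mat) = 1 :=
  Matrix.mem_unitaryGroup_iff'.mp hA.eigenvectorUnitary.2

lemma mul_star_self_unitary {A : Mat} (hA : A.IsHermitian) :
    (hA.eigenvectorUnitary : Mat) * star (hA.eigenvectorUnitary : Mat) = 1 :=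
  Matrix.mem_unitaryGroup_iff.mp hA.eigenvectorUnitary.2

lemma trace_conj_diag {A : Mat} (hA : A.IsHermitian) (d : Fin n → ℝ) :
    ((hA.eigenvectorUnitary : Mat) * Matrix.diagonal d *
      star (hA.eigenvectorUnitary : Mat)).trace = ∑ i, d i := by
  rw [Matrix.trace_mul_cycle, star_mul_self_unitary, one_mul, Matrix.trace_diagonal]

lemma isHermitian_conj_diag {A : Mat} (hA : A.IsHermitian) (d : Fin n → ℝ) :
    ((hA.eigenvectorUnitary : Mat) * Matrix.diagonal d *
      star (hA.eigenvectorUnitary : Mat)).IsHermitian := by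
  have h : (Matrix.diagonal d : Mat).IsHermitian := Matrix.isHermitian_diagonal d
  simpa [Matrix.star_eq_conjTranspose] using Matrix.isHermitian_mul_mul_conjTranspose (hA.eigenvectorUnitary : Mat) h

lemma posSemidef_conj_diag {A : Mat} (hA : A.IsHermitian) {d : Fin n → ℝ}
    (hd : ∀ i, 0 ≤ d i) :
    ((hA.eigenvectorUnitary : Mat) * Matrix.diagonal d *
      star (hA.eigenvectorUnitary : Mat)).PosSemidef := by
  have h : (Matrix.diagonal d : Mat).PosSemidef := Matrix.PosSemidef.diagonal hd
  simpa [Matrix.star_eq_conjTranspose] using h.mul_mul_conjTranspose_same (hA.eigenvectorUnitary : Mat)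

lemma conj_diag_mul {A : Mat} (hA : A.IsHermitian) (d e : Fin n → ℝ) :
    ((hA.eigenvectorUnitary : Mat) * Matrix.diagonal d * star (hA.eigenvectorUnitary : Mat)) *
    ((hA.eigenvectorUnitary : Mat) * Matrix.diagonal e * star (hA.eigenvectorUnitary : Mat)) =
    (hA.eigenvectorUnitary : Mat) * Matrix.diagonal (fun i => d i * e i) *
      star (hA.eigenvectorUnitary : Mat) := by
  rw [← Matrix.diagonal_mul_diagonal]
  calc ((hA.eigenvectorUnitary : Mat) * Matrix.diagonal d * star (hA.eigenvectorUnitary : Mat)) *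
      ((hA.eigenvectorUnitary : Mat) * Matrix.diagonal e * star (hA.eigenvectorUnitary : Mat))
      = (hA.eigenvectorUnitary : Mat) * Matrix.diagonal d *
        (star (hA.eigenvectorUnitary : Mat) * (hA.eigenvectorUnitary : Mat)) *
        Matrix.diagonal e * star (hA.eigenvectorUnitary : Mat) := by
        simp only [Matrix.mul_assoc]
    _ = _ := by rw [star_mul_self_unitary]; simp only [Matrix.mul_assoc, one_mul]

lemma matLog_eq {B : Mat} (hB : B.IsHermitian) :
    matLog B = (hB.eigenvectorUnitary : Mat) *
      Matrix.diagonal (fun i => Real.log (hB.eigenvalues i)) *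
      star (hB.eigenvectorUnitary : Mat) := by
  unfold matLog
  rw [dif_pos hB]

lemma trace_matLog {B : Mat} (hB : B.IsHermitian) :
    (matLog B).trace = ∑ i, Real.log (hB.eigenvalues i) := by
  rw [matLog_eq hB, trace_conj_diag]

lemma isHermitian_matLog {B : Mat} (hB : B.IsHermitian) : (matLog B).IsHermitian := by
  rw [matLog_eq hB]; exact isHermitian_conj_diag hB _

lemma eig_ge_one {B : Mat} (hB : B.IsHermitian) (h : (B - 1).PosSemidef) (i : Fin n) :
    1 ≤ hB.eigenvalues i := by
  set v : Fin n → ℝ := ⇑(hB.eigenvectorBasis i) with hv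
  have hv0 : v ≠ 0 := fun hz =>
    hB.eigenvectorBasis.orthonormal.ne_zero i (by ext j; exact congrFun hz j)
  have hvv : 0 < dotProduct v v := by
    rcases lt_or_eq_of_le (Finset.sum_nonneg fun j _ => mul_self_nonneg (v j)) with h' | h'
    · exact h'
    · exact absurd (dotProduct_self_eq_zero.mp h'.symm) hv0
  have hmul : (B - 1) *ᵥ v = (hB.eigenvalues i - 1) • v := by
    rw [Matrix.sub_mulVec, hB.mulVec_eigenvectorBasis, Matrix.one_mulVec, sub_smul, one_smul]
  have h2 := h.dotProduct_mulVec_nonneg v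
  rw [_root_.star_vec, hmul, dotProduct_smul, smul_eq_mul] at h2
  nlinarith

lemma posSemidef_matLog {B : Mat} (hB : B.IsHermitian) (h : ∀ i, 1 ≤ hB.eigenvalues i) :
    (matLog B).PosSemidef := by
  rw [matLog_eq hB]
  exact posSemidef_conj_diag hB fun i => Real.log_nonneg (h i)

lemma trace_matLog_pd {B : Mat} (hB : B.PosDef) : (matLog B).trace = Real.log B.det := by
  rw [trace_matLog hB.1]
  have hd : B.det = ∏ i, hB.1.eigenvalues i := by
    simpa [RCLike.ofReal_real_eq_id] using hB.1.det_eq_prod_eigenvalues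
  rw [hd, Real.log_prod fun i _ => (hB.eigenvalues_pos i).ne']

/-- Positive semidefiniteness passes to entrywise limits. -/
lemma posSemidef_of_tendsto (M : ℕ → Mat) (L : Mat) (hL : L.IsHermitian)
    (hM : ∀ k, (M k).PosSemidef)
    (htend : ∀ i j, Tendsto (fun k => M k i j) atTop (𝓝 (L i j))) :
    L.PosSemidef := by
  refine Matrix.PosSemidef.of_dotProduct_mulVec_nonneg hL fun x => ?_
  rw [_root_.star_vec]
  have key : ∀ N : Mat, dotProduct x (N *ᵥ x) = ∑ i, ∑ j, x i * (N i j * x j) := by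
    intro N
    simp [dotProduct, Matrix.mulVec, Finset.mul_sum]
  have h1 : Tendsto (fun k => dotProduct x (M k *ᵥ x)) atTop
      (𝓝 (dotProduct x (L *ᵥ x))) := by
    simp only [key]
    exact tendsto_finset_sum _ fun i _ => tendsto_finset_sum _ fun j _ =>
      (((htend i j).mul_const (x j)).const_mul (x i))
  exact ge_of_tendsto' h1 fun k => by simpa [_root_.star_vec] using (hM k).dotProduct_mulVec_nonneg x

set_option maxHeartbeats 1600000 in
/-- Monotonicity of the positive semidefinite square root. -/
lemma sqrt_monotone {A B : Mat} (hA : A.PosSemidef) (hB : B.PosSemidef)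
    (hle : (B - A).PosSemidef) : ((posSemidefSqrt hB) - (posSemidefSqrt hA)).PosSemidef := by
  set S := (posSemidefSqrt hA) with hSdef
  set T := (posSemidefSqrt hB) with hTdef
  have hS := posSemidefSqrt_psd hA
  have hT := posSemidefSqrt_psd hB
  have hD : (T - S).IsHermitian := hT.1.sub hS.1
  refine hD.posSemidef_iff_eigenvalues_nonneg.mpr fun i => ?_
  by_contra hneg
  push_neg at hneg
  set t := hD.eigenvalues i with htdef
  set v : Fin n → ℝ := ⇑(hD.eigenvectorBasis i) with hv
  have hv0 : v ≠ 0 := fun hz =>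
    hD.eigenvectorBasis.orthonormal.ne_zero i (by ext j; exact congrFun hz j)
  have hDv : (T - S) *ᵥ v = t • v := hD.mulVec_eigenvectorBasis i
  have hsymm : (T - S)ᵀ = T - S := by
    have := hD.eq
    rwa [Matrix.conjTranspose_eq_transpose_of_trivial] at this
  have key : dotProduct v ((B - A) *ᵥ v)
      = t * (dotProduct v (T *ᵥ v)) + t * (dotProduct v (S *ᵥ v)) := by
    have hBA : B - A = T * (T - S) + (T - S) * S := by
      rw [mul_sub, sub_mul, hTdef, hSdef, posSemidefSqrt_mul_self,
        posSemidefSqrt_mul_self]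
      abel
    rw [hBA, Matrix.add_mulVec, dotProduct_add]
    congr 1
    · rw [← Matrix.mulVec_mulVec, hDv, Matrix.mulVec_smul, dotProduct_smul, smul_eq_mul]
    · rw [← Matrix.mulVec_mulVec, Matrix.dotProduct_mulVec]
      conv_lhs => rw [← hsymm]
      rw [Matrix.vecMul_transpose, hDv, smul_dotProduct, smul_eq_mul]
  have hge := hle.dotProduct_mulVec_nonneg v
  rw [_root_.star_vec, key] at hge
  have hqT : 0 ≤ dotProduct v (T *ᵥ v) := by simpa [_root_.star_vec] using hT.dotProduct_mulVec_nonneg v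
  have hqS : 0 ≤ dotProduct v (S *ᵥ v) := by simpa [_root_.star_vec] using hS.dotProduct_mulVec_nonneg v
  have hsum : dotProduct v (T *ᵥ v) + dotProduct v (S *ᵥ v) ≤ 0 := by
    by_contra hpos
    push_neg at hpos
    have hneg2 := mul_neg_of_neg_of_pos hneg hpos
    rw [mul_add] at hneg2
    linarith
  have hTz : dotProduct v (T *ᵥ v) = 0 := le_antisymm (by linarith) hqT
  have hSz : dotProduct v (S *ᵥ v) = 0 := le_antisymm (by linarith) hqS
  have hTv : T *ᵥ v = 0 := (hT.dotProduct_mulVec_zero_iff v).mp (by rwa [_root_.star_vec])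
  have hSv : S *ᵥ v = 0 := (hS.dotProduct_mulVec_zero_iff v).mp (by rwa [_root_.star_vec])
  have : t • v = 0 := by rw [← hDv, Matrix.sub_mulVec, hTv, hSv, sub_zero]
  rcases smul_eq_zero.mp this with h' | h'
  · exact hneg.ne h'
  · exact hv0 h'

/-- Matrix power along the spectral decomposition. -/
noncomputable def rpowMat {A : Mat} (hA : A.IsHermitian) (s : ℝ) : Mat :=
  (hA.eigenvectorUnitary : Mat) * Matrix.diagonal (fun i => hA.eigenvalues i ^ s) *
    star (hA.eigenvectorUnitary : Mat)

lemma rpowMat_one {A : Mat} (hA : A.IsHermitian) : rpowMat hA 1 = A := by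
  unfold rpowMat
  simp only [Real.rpow_one]
  exact (spectral_real hA).symm

lemma rpowMat_psd {A : Mat} (hA : A.PosSemidef) (s : ℝ) : (rpowMat hA.1 s).PosSemidef :=
  posSemidef_conj_diag hA.1 fun i => Real.rpow_nonneg (hA.eigenvalues_nonneg i) s

lemma rpowMat_sq {A : Mat} (hA : A.PosSemidef) (s : ℝ) :
    rpowMat hA.1 s * rpowMat hA.1 s = rpowMat hA.1 (2 * s) := by
  unfold rpowMat
  rw [conj_diag_mul]
  have hfun : (fun i => hA.1.eigenvalues i ^ s * hA.1.eigenvalues i ^ s)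
      = fun i => hA.1.eigenvalues i ^ (2 * s) := by
    funext i
    rcases eq_or_lt_of_le (hA.eigenvalues_nonneg i) with h0 | h0
    · rcases eq_or_ne s 0 with rfl | hs
      · simp
      · rw [← h0, Real.zero_rpow hs, Real.zero_rpow (mul_ne_zero two_ne_zero hs), mul_zero]
    · rw [← Real.rpow_add h0, two_mul]
  rw [hfun]

lemma sqrt_rpowMat {A : Mat} (hA : A.PosSemidef) (s : ℝ) :
    (posSemidefSqrt (rpowMat_psd hA s)) = rpowMat hA.1 (s / 2) := by
  refine (psd_eq_sqrt_of_sq_eq (rpowMat_psd hA (s / 2)) (rpowMat_psd hA s) ?_).symm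
  rw [pow_two, rpowMat_sq hA]
  have h2 : 2 * (s / 2) = s := by ring
  rw [h2]

set_option maxHeartbeats 1600000 in
lemma rpow_monotone {A B : Mat} (hA : A.PosSemidef) (hB : B.PosSemidef)
    (hle : (B - A).PosSemidef) (k : ℕ) :
    (rpowMat hB.1 ((2:ℝ)⁻¹ ^ k) - rpowMat hA.1 ((2:ℝ)⁻¹ ^ k)).PosSemidef := by
  induction k with
  | zero => simpa [pow_zero, rpowMat_one] using hle
  | succ k ih =>
      have h2 := sqrt_monotone (rpowMat_psd hA _) (rpowMat_psd hB _) ih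
      rw [sqrt_rpowMat hB ((2:ℝ)⁻¹ ^ k), sqrt_rpowMat hA ((2:ℝ)⁻¹ ^ k)] at h2
      have he : (2:ℝ)⁻¹ ^ k / 2 = (2:ℝ)⁻¹ ^ (k + 1) := by
        rw [pow_succ]; ring
      rwa [he] at h2

lemma scalar_log_limit {x : ℝ} (hx : 0 < x) :
    Tendsto (fun k : ℕ => (2:ℝ) ^ k * (x ^ ((2:ℝ)⁻¹ ^ k) - 1)) atTop (𝓝 (Real.log x)) := by
  have hd : HasDerivAt (fun s : ℝ => x ^ s) (Real.log x) 0 := by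
    have := (Real.hasStrictDerivAt_const_rpow hx 0).hasDerivAt
    simpa using this
  have hslope := hasDerivAt_iff_tendsto_slope.mp hd
  have htk : Tendsto (fun k : ℕ => (2:ℝ)⁻¹ ^ k) atTop (𝓝[≠] (0:ℝ)) := by
    rw [tendsto_nhdsWithin_iff]
    refine ⟨tendsto_pow_atTop_nhds_zero_of_lt_one (by norm_num) (by norm_num),
      Filter.Eventually.of_forall fun k => ?_⟩
    simp [pow_ne_zero]
  have := hslope.comp htk
  refine this.congr fun k => ?_
  simp only [Function.comp_apply, slope_def_field]
  rw [div_eq_inv_mul, sub_zero, Real.rpow_zero, inv_pow, inv_inv]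

lemma smul_rpow_sub_one {A : Mat} (hA : A.IsHermitian) (s c : ℝ) :
    c • (rpowMat hA s - 1) = (hA.eigenvectorUnitary : Mat) *
      Matrix.diagonal (fun i => c * (hA.eigenvalues i ^ s - 1)) *
      star (hA.eigenvectorUnitary : Mat) := by
  have h1 : (Matrix.diagonal (fun i => c * (hA.eigenvalues i ^ s - 1)) : Mat)
      = c • (Matrix.diagonal (fun i => hA.eigenvalues i ^ s) - 1) := by
    ext i j
    by_cases h : i = j
    · subst h
      simp [Matrix.smul_apply, mul_sub]
    · simp [Matrix.diagonal_apply_ne _ h, Matrix.one_apply_ne h, Matrix.smul_apply, h]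
  rw [h1]
  rw [Matrix.mul_smul, Matrix.smul_mul]
  congr 1
  rw [mul_sub, sub_mul, mul_one, mul_star_self_unitary]
  rfl

lemma conj_diag_entry {A : Mat} (hA : A.IsHermitian) (d : Fin n → ℝ) (i j : Fin n) :
    ((hA.eigenvectorUnitary : Mat) * Matrix.diagonal d * star (hA.eigenvectorUnitary : Mat)) i j
      = ∑ l, (hA.eigenvectorUnitary : Mat) i l * d l * (hA.eigenvectorUnitary : Mat) j l := by
  rw [Matrix.mul_apply]
  refine Finset.sum_congr rfl fun l _ => ?_
  rw [Matrix.mul_diagonal, Matrix.star_apply]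
  simp

lemma entry_tendsto {A : Mat} (hA : A.PosDef) (i j : Fin n) :
    Tendsto (fun k : ℕ => ((2:ℝ) ^ k • (rpowMat hA.1 ((2:ℝ)⁻¹ ^ k) - 1)) i j) atTop
      (𝓝 (matLog A i j)) := by
  have hform : ∀ k : ℕ, ((2:ℝ) ^ k • (rpowMat hA.1 ((2:ℝ)⁻¹ ^ k) - 1)) i j
      = ∑ l, (hA.1.eigenvectorUnitary : Mat) i l *
          ((2:ℝ) ^ k * (hA.1.eigenvalues l ^ ((2:ℝ)⁻¹ ^ k) - 1)) *
          (hA.1.eigenvectorUnitary : Mat) j l := by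
    intro k
    rw [smul_rpow_sub_one hA.1, conj_diag_entry]
  have hlog : matLog A i j = ∑ l, (hA.1.eigenvectorUnitary : Mat) i l *
      Real.log (hA.1.eigenvalues l) * (hA.1.eigenvectorUnitary : Mat) j l := by
    rw [matLog_eq hA.1, conj_diag_entry]
  simp only [hform, hlog]
  exact tendsto_finset_sum _ fun l _ =>
    ((scalar_log_limit (hA.eigenvalues_pos l)).const_mul _).mul_const _

/-- Operator monotonicity of the matrix logarithm. -/
lemma matLog_monotone {A B : Mat} (hA : A.PosDef) (hB : B.PosDef)
    (hle : (B - A).PosSemidef) : (matLog B - matLog A).PosSemidef := by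
  refine posSemidef_of_tendsto
    (fun k => (2:ℝ) ^ k • (rpowMat hB.1 ((2:ℝ)⁻¹ ^ k) - rpowMat hA.1 ((2:ℝ)⁻¹ ^ k)))
    _ ((isHermitian_matLog hB.1).sub (isHermitian_matLog hA.1)) (fun k => ?_) (fun i j => ?_)
  · have h := rpow_monotone hA.posSemidef hB.posSemidef hle k
    refine Matrix.PosSemidef.of_dotProduct_mulVec_nonneg (by rw [Matrix.IsHermitian, Matrix.conjTranspose_smul, h.1.eq, star_trivial])
      fun x => ?_
    · rw [Matrix.smul_mulVec, dotProduct_smul, smul_eq_mul]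
      exact mul_nonneg (by positivity) (h.dotProduct_mulVec_nonneg x)
  · have h1 := entry_tendsto hB i j
    have h2 := entry_tendsto hA i j
    refine (h1.sub h2).congr fun k => ?_
    simp only [Matrix.smul_apply, Matrix.sub_apply, Matrix.one_apply, smul_eq_mul]
    ring

/-- The nuclear norm of a positive semidefinite matrix is its trace. -/
lemma nuclearNorm_psd {B : Mat} (hB : B.PosSemidef) : nuclearNorm B = B.trace := by
  have hS : (Bᴴ * B).PosSemidef := Matrix.posSemidef_conjTranspose_mul_self B
  have hsq : B ^ 2 = Bᴴ * B := by rw [hB.1.eq, pow_two]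
  have hBs : B = (posSemidefSqrt hS) := psd_eq_sqrt_of_sq_eq hB hS hsq
  have ht : (posSemidefSqrt hS).trace = ∑ i, Real.sqrt (hS.1.eigenvalues i) := by
    rw [posSemidefSqrt]
    have := trace_conj_diag hS.1 (fun i => Real.sqrt (hS.1.eigenvalues i))
    simpa [RCLike.ofReal_real_eq_id, Function.comp_def] using this
  have hnn : nuclearNorm B = ∑ i, Real.sqrt (hS.1.eigenvalues i) := by
    unfold nuclearNorm singVals
    rfl
  rw [hnn, ← ht, ← hBs]

end LogAux

theorem stmt11 {n : ℕ} (A Ahat : Matrix (Fin n) (Fin n) ℝ) (hAs : A.IsSymm) (hAhs : Ahat.IsSymm)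
    (hpsd : Ahat.PosSemidef) (hle : (A - Ahat).PosSemidef) :
    nuclearNorm (matLog (invSqrt (Ahat + 1) * (A + 1) * invSqrt (Ahat + 1)))
        = (matLog (A + 1)).trace - (matLog (Ahat + 1)).trace ∧
      nuclearNorm (matLog (invSqrt (Ahat + 1) * (A + 1) * invSqrt (Ahat + 1)))
        = nuclearNorm (matLog (A + 1) - matLog (Ahat + 1)) := by
  classical
  have hApsd : A.PosSemidef := by
    have h := hle.add hpsd
    have h2 : A - Ahat + Ahat = A := by abel
    rwa [h2] at h
  have hA1 : (A + 1).PosDef := Matrix.PosDef.posSemidef_add hApsd Matrix.PosDef.one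
  have hP : (Ahat + 1).PosDef := Matrix.PosDef.posSemidef_add hpsd Matrix.PosDef.one
  have hPsd : (Ahat + 1).PosSemidef := hP.posSemidef
  have hiv : invSqrt (Ahat + 1) = (posSemidefSqrt hPsd)⁻¹ := by
    unfold invSqrt
    rw [dif_pos hPsd]
  have hRpsd : (posSemidefSqrt hPsd).PosSemidef := posSemidefSqrt_psd hPsd
  have hRH : (posSemidefSqrt hPsd).IsHermitian := hRpsd.1
  have hRR : (posSemidefSqrt hPsd) * (posSemidefSqrt hPsd) = Ahat + 1 := posSemidefSqrt_mul_self hPsd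
  have hdetP : 0 < (Ahat + 1).det := hP.det_pos
  have hdetR : (posSemidefSqrt hPsd).det * (posSemidefSqrt hPsd).det = (Ahat + 1).det := by
    rw [← Matrix.det_mul, hRR]
  have hdetRne : (posSemidefSqrt hPsd).det ≠ 0 := by
    intro h
    rw [h, mul_zero] at hdetR
    exact hdetP.ne' hdetR.symm
  have hRunit : IsUnit (posSemidefSqrt hPsd).det := isUnit_iff_ne_zero.mpr hdetRne
  have hQH : ((posSemidefSqrt hPsd)⁻¹).IsHermitian := hRH.inv
  have hQR : (posSemidefSqrt hPsd)⁻¹ * (posSemidefSqrt hPsd) = 1 := Matrix.nonsing_inv_mul _ hRunit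
  have hRQ : (posSemidefSqrt hPsd) * (posSemidefSqrt hPsd)⁻¹ = 1 := Matrix.mul_nonsing_inv _ hRunit
  have hQPQ : (posSemidefSqrt hPsd)⁻¹ * (Ahat + 1) * (posSemidefSqrt hPsd)⁻¹ = 1 := by
    calc (posSemidefSqrt hPsd)⁻¹ * (Ahat + 1) * (posSemidefSqrt hPsd)⁻¹
        = (posSemidefSqrt hPsd)⁻¹ * ((posSemidefSqrt hPsd) * (posSemidefSqrt hPsd)) * (posSemidefSqrt hPsd)⁻¹ := by rw [hRR]
      _ = ((posSemidefSqrt hPsd)⁻¹ * (posSemidefSqrt hPsd)) * ((posSemidefSqrt hPsd) * (posSemidefSqrt hPsd)⁻¹) := by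
          simp only [Matrix.mul_assoc]
      _ = 1 := by rw [hQR, hRQ, one_mul]
  have hMH : ((posSemidefSqrt hPsd)⁻¹ * (A + 1) * (posSemidefSqrt hPsd)⁻¹).IsHermitian := by
    have h := Matrix.isHermitian_mul_mul_conjTranspose ((posSemidefSqrt hPsd)⁻¹) hA1.1
    rwa [hQH.eq] at h
  have hM1 : ((posSemidefSqrt hPsd)⁻¹ * (A + 1) * (posSemidefSqrt hPsd)⁻¹ - 1).PosSemidef := by
    have hsub : (posSemidefSqrt hPsd)⁻¹ * (A + 1) * (posSemidefSqrt hPsd)⁻¹ - 1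
        = (posSemidefSqrt hPsd)⁻¹ * (A - Ahat) * (posSemidefSqrt hPsd)⁻¹ := by
      have h1 : (A + 1) - (Ahat + 1) = A - Ahat := by abel
      calc (posSemidefSqrt hPsd)⁻¹ * (A + 1) * (posSemidefSqrt hPsd)⁻¹ - 1
          = (posSemidefSqrt hPsd)⁻¹ * (A + 1) * (posSemidefSqrt hPsd)⁻¹
            - (posSemidefSqrt hPsd)⁻¹ * (Ahat + 1) * (posSemidefSqrt hPsd)⁻¹ := by rw [hQPQ]
        _ = (posSemidefSqrt hPsd)⁻¹ * ((A + 1) - (Ahat + 1)) * (posSemidefSqrt hPsd)⁻¹ := by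
            rw [Matrix.mul_sub, Matrix.sub_mul]
        _ = (posSemidefSqrt hPsd)⁻¹ * (A - Ahat) * (posSemidefSqrt hPsd)⁻¹ := by rw [h1]
    rw [hsub]
    have h := hle.mul_mul_conjTranspose_same ((posSemidefSqrt hPsd)⁻¹)
    rwa [hQH.eq] at h
  have hMpd : ((posSemidefSqrt hPsd)⁻¹ * (A + 1) * (posSemidefSqrt hPsd)⁻¹).PosDef := by
    have h : (posSemidefSqrt hPsd)⁻¹ * (A + 1) * (posSemidefSqrt hPsd)⁻¹
        = ((posSemidefSqrt hPsd)⁻¹ * (A + 1) * (posSemidefSqrt hPsd)⁻¹ - 1) + 1 := by abel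
    rw [h]
    exact Matrix.PosDef.posSemidef_add hM1 Matrix.PosDef.one
  have heig : ∀ i, 1 ≤ hMH.eigenvalues i := eig_ge_one hMH hM1
  have hlogMpsd : (matLog ((posSemidefSqrt hPsd)⁻¹ * (A + 1) * (posSemidefSqrt hPsd)⁻¹)).PosSemidef :=
    posSemidef_matLog hMH heig
  have hdetQ : ((posSemidefSqrt hPsd)⁻¹).det = (posSemidefSqrt hPsd).det⁻¹ := by
    rw [Matrix.det_nonsing_inv, Ring.inverse_eq_inv]
  have hdetM : ((posSemidefSqrt hPsd)⁻¹ * (A + 1) * (posSemidefSqrt hPsd)⁻¹).det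
      = (A + 1).det * ((Ahat + 1).det)⁻¹ := by
    rw [Matrix.det_mul, Matrix.det_mul, hdetQ, ← hdetR]
    field_simp
  have t1 : (matLog ((posSemidefSqrt hPsd)⁻¹ * (A + 1) * (posSemidefSqrt hPsd)⁻¹)).trace
      = (matLog (A + 1)).trace - (matLog (Ahat + 1)).trace := by
    rw [trace_matLog_pd hMpd, trace_matLog_pd hA1, trace_matLog_pd hP, hdetM,
      Real.log_mul hA1.det_pos.ne' (inv_ne_zero hdetP.ne'), Real.log_inv]
    ring
  have hsub2 : ((A + 1) - (Ahat + 1)).PosSemidef := by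
    have h1 : (A + 1) - (Ahat + 1) = A - Ahat := by abel
    rwa [h1]
  have hmono := matLog_monotone hP hA1 hsub2
  rw [hiv]
  refine ⟨?_, ?_⟩
  · rw [nuclearNorm_psd hlogMpsd, t1]
  · rw [nuclearNorm_psd hlogMpsd, t1, nuclearNorm_psd hmono]
    exact (Matrix.trace_sub _ _).symm
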